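/- Privacy of the balls-into-bins mechanism: let m, s, k, n be positive integers with s ≤ m, let p ∈ [0,1], let 0 < ε ≤ 3 and 0 < δ < 1, and assume k + n·p ≥ (32·ln(2/δ)/ε²)·(m/s). Then for any two distinct subsets S, S' of [m] with |S| = |S'| = s, and any set Y of multisets over [m], Pr[M^BIB(S) ∈ Y] ≤ e^ε · Pr[M^BIB(S') ∈ Y] + δ. -/

import Mathlib

open scoped ENNReal

noncomputable def uniformBin (m : ℕ) (hm : 0 < m) : PMF (Fin m) :=
  PMF.uniformOfFinset Finset.univ
    (Finset.univ_nonempty_iff.mpr (Fin.pos_iff_nonempty.mp hm))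

/-- Sum of `n` independent copies of a random multiset. -/
noncomputable def repeatMSum {α : Type*} (ν : PMF (Multiset α)) : ℕ → PMF (Multiset α)
  | 0 => PMF.pure 0
  | n + 1 => ν.bind fun s => (repeatMSum ν n).map (s + ·)

/-- With probability `p`, one draw from `ν`; otherwise nothing. -/
noncomputable def trialM {α : Type*} (ν : PMF α) (p : ℝ≥0∞) (hp : p ≤ 1) : PMF (Multiset α) :=
  (PMF.ofFintype (fun b => cond b p (1 - p)) (by simp [hp])).bind fun b => if b then ν.map (fun x => {x}) else PMF.pure 0

/-- The balls-into-bins mechanism. -/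
noncomputable def MBIB (m k n : ℕ) (hm : 0 < m) (p : ℝ≥0∞) (hp : p ≤ 1)
    (S : Finset (Fin m)) (hS : S.Nonempty) : PMF (Multiset (Fin m)) :=
  (PMF.uniformOfFinset S hS).bind fun x =>
    (repeatMSum ((uniformBin m hm).map (fun y => {y})) k).bind fun A =>
      (repeatMSum (trialM (uniformBin m hm) p hp) n).map fun C => {x} + A + C

/- workhorse tsum lemmas -/
lemma tsum_pmf_map_mul {α β : Type*} (Z : PMF α) (g : α → β) (f : β → ℝ≥0∞) :
    ∑' y, (Z.map g) y * f y = ∑' a, Z a * f (g a) := by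
  classical
  simp only [PMF.map_apply]
  calc ∑' y, (∑' a, if y = g a then Z a else 0) * f y
      = ∑' y, ∑' a, (if y = g a then Z a else 0) * f y := by
        congr 1; ext y; rw [ENNReal.tsum_mul_right]
    _ = ∑' a, ∑' y, (if y = g a then Z a else 0) * f y := ENNReal.tsum_comm
    _ = ∑' a, Z a * f (g a) := by
        congr 1
        ext a
        rw [show (fun y => (if y = g a then Z a else 0) * f y)
          = fun y => if y = g a then Z a * f y else 0 by ext y; split <;> simp]
        exact (tsum_eq_single (g a) (by intro b hb; simp [hb])).trans (by simp)

lemma tsum_pmf_bind_mul {α β : Type*} (X : PMF α) (F : α → PMF β) (f : β → ℝ≥0∞) :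
    ∑' y, (X.bind F) y * f y = ∑' a, X a * ∑' y, F a y * f y := by
  simp only [PMF.bind_apply]
  calc ∑' y, (∑' a, X a * F a y) * f y = ∑' y, ∑' a, X a * F a y * f y := by
        congr 1; ext y; rw [ENNReal.tsum_mul_right]
    _ = ∑' a, ∑' y, X a * F a y * f y := ENNReal.tsum_comm
    _ = ∑' a, X a * ∑' y, F a y * f y := by
        congr 1; ext a; rw [← ENNReal.tsum_mul_left]; congr 1; ext y; ring


section Stage2
variable {m : ℕ}

noncomputable def conv (ν Z : PMF (Multiset (Fin m))) : PMF (Multiset (Fin m)) :=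
  ν.bind fun s => Z.map (s + ·)

lemma map_cons_apply (Z : PMF (Multiset (Fin m))) (x : Fin m) (y : Multiset (Fin m)) :
    (Z.map (x ::ₘ ·)) y = if x ∈ y then Z (y.erase x) else 0 := by
  classical
  rw [PMF.map_apply]
  by_cases hx : x ∈ y
  · simp only [hx, if_true]
    refine (tsum_eq_single (y.erase x) ?_).trans ?_
    · intro b hb
      rw [if_neg]
      intro h
      exact hb (by rw [h, Multiset.erase_cons_head])
    · rw [if_pos (Multiset.cons_erase hx).symm]
  · simp only [hx, if_false]
    convert tsum_zero with b
    rw [if_neg]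
    intro h
    exact hx (h ▸ Multiset.mem_cons_self x b)

lemma conv_pure_zero (W : PMF (Multiset (Fin m))) : conv (PMF.pure 0) W = W := by
  rw [conv, PMF.pure_bind]
  simp only [zero_add]
  exact PMF.map_id W

lemma conv_assoc (X Y W : PMF (Multiset (Fin m))) :
    conv (conv X Y) W = conv X (conv Y W) := by
  simp only [conv, PMF.bind_bind, PMF.map_bind, PMF.bind_map]
  have : ∀ s : Multiset (Fin m),
      ((fun t => PMF.map (fun x => t + x) W) ∘ fun x => s + x)
        = fun y => PMF.map (fun x => s + x) (PMF.map (fun x => y + x) W) := by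
    intro s
    funext y
    rw [PMF.map_comp]
    simp only [Function.comp_def, add_assoc]
  simp only [this]

/-- The key exchangeability property. -/
def Exch (Z : PMF (Multiset (Fin m))) : Prop :=
  ∀ (z : Multiset (Fin m)) (x x' : Fin m),
    ((z.count x : ℝ≥0∞) + 1) * Z (x ::ₘ z) = ((z.count x' : ℝ≥0∞) + 1) * Z (x' ::ₘ z)

lemma exch_pure : Exch (PMF.pure (0 : Multiset (Fin m))) := by
  intro z x x'
  rw [PMF.pure_apply, PMF.pure_apply, if_neg (by simp [eq_comm]), if_neg (by simp [eq_comm])]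
  simp

lemma exch_step {Z W : PMF (Multiset (Fin m))} (c₀ c₁ : ℝ≥0∞) (hZ : Exch Z)
    (hW : ∀ y, W y = c₀ * Z y +
      c₁ * ∑ u : Fin m, (if u ∈ y then Z (y.erase u) else 0)) : Exch W := by
  classical
  have key : ∀ x : Fin m, ∀ z : Multiset (Fin m),
      ((z.count x : ℝ≥0∞) + 1) * W (x ::ₘ z)
        = c₀ * (((z.count x : ℝ≥0∞) + 1) * Z (x ::ₘ z)) + c₁ * Z z +
          c₁ * ∑ u : Fin m, (if u ∈ z then
            (((z.erase u).count x : ℝ≥0∞) + 1) * Z (x ::ₘ z.erase u) else 0) := by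
    intro x z
    set c : ℝ≥0∞ := (z.count x : ℝ≥0∞) with hc
    have main2 : ∑ u : Fin m, (if u ∈ x ::ₘ z then Z ((x ::ₘ z).erase u) else 0)
        = Z z + ∑ u ∈ Finset.univ.erase x,
            (if u ∈ z then Z (x ::ₘ z.erase u) else 0) := by
      rw [← Finset.add_sum_erase (Finset.univ) _ (Finset.mem_univ x),
        if_pos (Multiset.mem_cons_self x z), Multiset.erase_cons_head]
      congr 1
      refine Finset.sum_congr rfl fun u hu => ?_
      have hux : u ≠ x := Finset.ne_of_mem_erase hu
      by_cases h : u ∈ z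
      · rw [if_pos (Multiset.mem_cons_of_mem h), if_pos h,
          Multiset.erase_cons_tail z (Ne.symm hux)]
      · rw [if_neg (by simp [Multiset.mem_cons, hux, h]), if_neg h]
    have main3 : ∑ u : Fin m, (if u ∈ z then
          (((z.erase u).count x : ℝ≥0∞) + 1) * Z (x ::ₘ z.erase u) else 0)
        = c * Z z + (c + 1) * ∑ u ∈ Finset.univ.erase x,
            (if u ∈ z then Z (x ::ₘ z.erase u) else 0) := by
      rw [← Finset.add_sum_erase (Finset.univ) _ (Finset.mem_univ x)]
      congr 1
      · -- u = x term
        by_cases h : x ∈ z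
        · rw [if_pos h, Multiset.cons_erase h]
          have hcnt : (z.erase x).count x + 1 = z.count x := by
            rw [Multiset.count_erase_self]
            have := Multiset.one_le_count_iff_mem.mpr h
            omega
          rw [show ((Multiset.count x (z.erase x) : ℝ≥0∞) + 1) = c by
            rw [hc]; exact_mod_cast congrArg (Nat.cast : ℕ → ℝ≥0∞) hcnt]
        · rw [if_neg h, hc, Multiset.count_eq_zero_of_notMem h]
          simp
      · rw [Finset.mul_sum]
        refine Finset.sum_congr rfl fun u hu => ?_
        have hux : u ≠ x := Finset.ne_of_mem_erase hu
        by_cases h : u ∈ z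
        · rw [if_pos h, if_pos h, Multiset.count_erase_of_ne (Ne.symm hux)]
        · simp [h]
    rw [hW, main2, main3]
    ring
  intro z x x'
  rw [key x z, key x' z, hZ z x x']
  congr 2
  refine Finset.sum_congr rfl fun u _ => ?_
  by_cases h : u ∈ z
  · rw [if_pos h, if_pos h, hZ (z.erase u) x x']
  · simp [h]

lemma uniformBin_apply (hm : 0 < m) (u : Fin m) : uniformBin m hm u = (m : ℝ≥0∞)⁻¹ := by
  rw [uniformBin, PMF.uniformOfFinset_apply, if_pos (Finset.mem_univ u)]
  simp

noncomputable def nu1 (hm : 0 < m) : PMF (Multiset (Fin m)) :=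
  (uniformBin m hm).map (fun y => {y})

lemma conv_nu1 (hm : 0 < m) (Z : PMF (Multiset (Fin m))) :
    conv (nu1 hm) Z = (uniformBin m hm).bind fun u => Z.map (u ::ₘ ·) := by
  rw [conv, nu1, PMF.bind_map]
  congr 1

lemma conv_nu1_apply (hm : 0 < m) (Z : PMF (Multiset (Fin m))) (y : Multiset (Fin m)) :
    (conv (nu1 hm) Z) y
      = (m : ℝ≥0∞)⁻¹ * ∑ u : Fin m, (if u ∈ y then Z (y.erase u) else 0) := by
  classical
  rw [conv_nu1, PMF.bind_apply, tsum_fintype, Finset.mul_sum]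
  refine Finset.sum_congr rfl fun u _ => ?_
  rw [uniformBin_apply, map_cons_apply]

lemma conv_nu2_apply (hm : 0 < m) (p : ℝ≥0∞) (hp : p ≤ 1) (Z : PMF (Multiset (Fin m)))
    (y : Multiset (Fin m)) :
    (conv (trialM (uniformBin m hm) p hp) Z) y
      = (1 - p) * Z y +
        (p * (m : ℝ≥0∞)⁻¹) * ∑ u : Fin m, (if u ∈ y then Z (y.erase u) else 0) := by
  classical
  rw [show conv (trialM (uniformBin m hm) p hp) Z
      = (PMF.ofFintype (fun b => cond b p (1 - p)) (by simp [hp])).bind fun b =>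
          conv (if b then (uniformBin m hm).map (fun x => {x}) else PMF.pure 0) Z by
    rw [conv, trialM, PMF.bind_bind]; rfl]
  rw [PMF.bind_apply, tsum_bool]
  rw [PMF.ofFintype_apply, PMF.ofFintype_apply]
  simp only [cond_false, cond_true]
  simp only [Bool.false_eq_true, if_false, if_true, conv_pure_zero]
  rw [show ((uniformBin m hm).map (fun x => ({x} : Multiset (Fin m)))) = nu1 hm from rfl]
  rw [conv_nu1_apply hm Z y]
  ring

lemma exch_conv_nu1 (hm : 0 < m) {Z : PMF (Multiset (Fin m))} (hZ : Exch Z) :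
    Exch (conv (nu1 hm) Z) := by
  refine exch_step 0 ((m : ℝ≥0∞)⁻¹) hZ fun y => ?_
  rw [conv_nu1_apply hm Z y, zero_mul, zero_add]

lemma exch_conv_nu2 (hm : 0 < m) (p : ℝ≥0∞) (hp : p ≤ 1)
    {Z : PMF (Multiset (Fin m))} (hZ : Exch Z) :
    Exch (conv (trialM (uniformBin m hm) p hp) Z) := by
  refine exch_step (1 - p) (p * (m : ℝ≥0∞)⁻¹) hZ fun y => ?_
  rw [conv_nu2_apply hm p hp Z y]

lemma exch_repeat_conv (hm : 0 < m) (p : ℝ≥0∞) (hp : p ≤ 1) (k n : ℕ) :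
    Exch (conv (repeatMSum (nu1 hm) k) (repeatMSum (trialM (uniformBin m hm) p hp) n)) := by
  induction k with
  | zero =>
      rw [show repeatMSum (nu1 hm) 0 = PMF.pure 0 from rfl, conv_pure_zero]
      induction n with
      | zero => exact exch_pure
      | succ n ih =>
          rw [show repeatMSum (trialM (uniformBin m hm) p hp) (n+1)
              = conv (trialM (uniformBin m hm) p hp)
                  (repeatMSum (trialM (uniformBin m hm) p hp) n) from rfl]
          exact exch_conv_nu2 hm p hp ih
  | succ k ih =>
      rw [show repeatMSum (nu1 hm) (k+1) = conv (nu1 hm) (repeatMSum (nu1 hm) k) from rfl,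
        conv_assoc]
      exact exch_conv_nu1 hm ih

noncomputable def Ztot (hm : 0 < m) (p : ℝ≥0∞) (hp : p ≤ 1) (k n : ℕ) :
    PMF (Multiset (Fin m)) :=
  conv (repeatMSum (nu1 hm) k) (repeatMSum (trialM (uniformBin m hm) p hp) n)

lemma exch_Ztot (hm : 0 < m) (p : ℝ≥0∞) (hp : p ≤ 1) (k n : ℕ) :
    Exch (Ztot hm p hp k n) := exch_repeat_conv hm p hp k n

lemma MBIB_eq (k n : ℕ) (hm : 0 < m) (p : ℝ≥0∞) (hp : p ≤ 1)
    (S : Finset (Fin m)) (hS : S.Nonempty) :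
    MBIB m k n hm p hp S hS
      = (PMF.uniformOfFinset S hS).bind fun x => (Ztot hm p hp k n).map (x ::ₘ ·) := by
  rw [MBIB]
  congr 1
  funext x
  rw [Ztot, conv, PMF.map_bind]
  congr 1
  funext A
  rw [PMF.map_comp]
  congr 1
  funext C
  simp only [Function.comp_apply]
  rw [← Multiset.singleton_add, add_assoc]

lemma MBIB_apply (k n : ℕ) (hm : 0 < m) (p : ℝ≥0∞) (hp : p ≤ 1)
    (S : Finset (Fin m)) (hS : S.Nonempty) (y : Multiset (Fin m)) :
    MBIB m k n hm p hp S hS y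
      = ∑ x ∈ S, (S.card : ℝ≥0∞)⁻¹ *
          (if x ∈ y then (Ztot hm p hp k n) (y.erase x) else 0) := by
  classical
  rw [MBIB_eq, PMF.bind_apply, tsum_fintype]
  rw [← Finset.sum_subset (Finset.subset_univ S) (by
    intro x _ hxS
    rw [PMF.uniformOfFinset_apply, if_neg hxS, zero_mul])]
  refine Finset.sum_congr rfl fun x hx => ?_
  rw [PMF.uniformOfFinset_apply, if_pos hx, map_cons_apply]

noncomputable def sigE (S : Finset (Fin m)) (y : Multiset (Fin m)) : ℝ≥0∞ :=
  ∑ x ∈ S, (y.count x : ℝ≥0∞)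

lemma count_G {Z : PMF (Multiset (Fin m))} (hZ : Exch Z) (x x' : Fin m)
    (y : Multiset (Fin m)) :
    (y.count x' : ℝ≥0∞) * (if x ∈ y then Z (y.erase x) else 0)
      = (y.count x : ℝ≥0∞) * (if x' ∈ y then Z (y.erase x') else 0) := by
  classical
  by_cases hx : x ∈ y
  · by_cases hx' : x' ∈ y
    · by_cases hxx : x = x'
      · subst hxx; rfl
      · rw [if_pos hx, if_pos hx']
        set z := (y.erase x).erase x' with hz
        have hx'e : x' ∈ y.erase x := (Multiset.mem_erase_of_ne (Ne.symm hxx)).mpr hx'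
        have e1 : x' ::ₘ z = y.erase x := Multiset.cons_erase hx'e
        have hxe : x ∈ y.erase x' := (Multiset.mem_erase_of_ne hxx).mpr hx
        have e2 : x ::ₘ z = y.erase x' := by
          rw [hz, Multiset.erase_comm]; exact Multiset.cons_erase hxe
        have c1 : (y.count x' : ℝ≥0∞) = (z.count x' : ℝ≥0∞) + 1 := by
          have := congrArg (Multiset.count x') e1
          rw [Multiset.count_cons_self] at this
          rw [← Multiset.count_erase_of_ne (Ne.symm hxx) y, ← this]
          push_cast; ring
        have c2 : (y.count x : ℝ≥0∞) = (z.count x : ℝ≥0∞) + 1 := by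
          have := congrArg (Multiset.count x) e2
          rw [Multiset.count_cons_self] at this
          rw [← Multiset.count_erase_of_ne hxx y, ← this]
          push_cast; ring
        rw [c1, c2, ← e1, ← e2]
        exact hZ z x' x
    · rw [if_neg hx', Multiset.count_eq_zero_of_notMem hx']
      simp
  · rw [if_neg hx, Multiset.count_eq_zero_of_notMem hx]
    simp

lemma ratio_identity (k n : ℕ) (hm : 0 < m) (p : ℝ≥0∞) (hp : p ≤ 1)
    (S S' : Finset (Fin m)) (hS : S.Nonempty) (hS' : S'.Nonempty)
    (hcard : S.card = S'.card) (y : Multiset (Fin m)) :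
    MBIB m k n hm p hp S hS y * sigE S' y
      = MBIB m k n hm p hp S' hS' y * sigE S y := by
  classical
  rw [MBIB_apply, MBIB_apply, sigE, sigE, Finset.sum_mul_sum, Finset.sum_mul_sum]
  rw [Finset.sum_comm]
  refine Finset.sum_congr rfl fun x' hx' => ?_
  refine Finset.sum_congr rfl fun x hx => ?_
  rw [hcard, mul_assoc, mul_assoc, mul_comm _ ((Multiset.count x' y : ℝ≥0∞)),
    count_G (exch_Ztot hm p hp k n) x x' y]
  ring

/-! ### counting and mgf -/

def sig (S : Finset (Fin m)) (y : Multiset (Fin m)) : ℕ := ∑ x ∈ S, y.count x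

lemma sigE_eq (S : Finset (Fin m)) (y : Multiset (Fin m)) :
    sigE S y = (sig S y : ℝ≥0∞) := by
  rw [sig, sigE, Nat.cast_sum]

lemma sig_add (S : Finset (Fin m)) (a b : Multiset (Fin m)) :
    sig S (a + b) = sig S a + sig S b := by
  simp [sig, Multiset.count_add, Finset.sum_add_distrib]

lemma sig_zero (S : Finset (Fin m)) : sig S 0 = 0 := by simp [sig]

lemma sig_singleton (S : Finset (Fin m)) (u : Fin m) :
    sig S ({u} : Multiset (Fin m)) = if u ∈ S then 1 else 0 := by
  classical
  simp only [sig, Multiset.count_singleton]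
  rw [Finset.sum_ite_eq' S u (fun _ => 1)]

lemma sig_cons (S : Finset (Fin m)) (x : Fin m) (z : Multiset (Fin m)) :
    sig S (x ::ₘ z) = (if x ∈ S then 1 else 0) + sig S z := by
  rw [← Multiset.singleton_add, sig_add, sig_singleton]

lemma sig_cons_bounds (S : Finset (Fin m)) (x : Fin m) (a : Multiset (Fin m)) :
    sig S a ≤ sig S (x ::ₘ a) ∧ sig S (x ::ₘ a) ≤ sig S a + 1 := by
  rw [sig_cons]
  split <;> omega

noncomputable def Phi (r : ℝ≥0∞) (S : Finset (Fin m)) (W : PMF (Multiset (Fin m))) : ℝ≥0∞ :=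
  ∑' a, W a * r ^ (sig S a)

lemma Phi_conv (r : ℝ≥0∞) (S : Finset (Fin m)) (X Y : PMF (Multiset (Fin m))) :
    Phi r S (conv X Y) = Phi r S X * Phi r S Y := by
  rw [Phi, conv, tsum_pmf_bind_mul]
  have : ∀ s : Multiset (Fin m),
      ∑' a, (Y.map (s + ·)) a * r ^ (sig S a) = r ^ (sig S s) * Phi r S Y := by
    intro s
    rw [tsum_pmf_map_mul, Phi, ← ENNReal.tsum_mul_left]
    congr 1
    funext a
    rw [sig_add, pow_add]
    ring
  simp only [this, ← mul_assoc]
  rw [ENNReal.tsum_mul_right]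
  rfl

lemma Phi_pure_zero (r : ℝ≥0∞) (S : Finset (Fin m)) :
    Phi r S (PMF.pure (0 : Multiset (Fin m))) = 1 := by
  classical
  rw [Phi]
  refine (tsum_eq_single 0 ?_).trans ?_
  · intro b hb
    rw [PMF.pure_apply, if_neg (by exact fun h => hb (by simp [h])), zero_mul]
  · rw [PMF.pure_apply, if_pos rfl, sig_zero, pow_zero, one_mul]

lemma Phi_repeat (r : ℝ≥0∞) (S : Finset (Fin m)) (ν : PMF (Multiset (Fin m))) (j : ℕ) :
    Phi r S (repeatMSum ν j) = (Phi r S ν) ^ j := by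
  induction j with
  | zero => rw [pow_zero]; exact Phi_pure_zero r S
  | succ j ih =>
      rw [show repeatMSum ν (j+1) = conv ν (repeatMSum ν j) from rfl, Phi_conv, ih, pow_succ]
      ring

lemma Phi_nu1 (r : ℝ≥0∞) (S : Finset (Fin m)) (hm : 0 < m) :
    Phi r S (nu1 hm) = (m : ℝ≥0∞)⁻¹ * ((S.card : ℝ≥0∞) * r + ((m - S.card : ℕ) : ℝ≥0∞)) := by
  classical
  rw [Phi, nu1, tsum_pmf_map_mul, tsum_fintype]
  have : ∀ u : Fin m, uniformBin m hm u * r ^ (sig S ({u} : Multiset (Fin m)))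
      = (m : ℝ≥0∞)⁻¹ * (if u ∈ S then r else 1) := by
    intro u
    rw [uniformBin_apply, sig_singleton]
    by_cases h : u ∈ S <;> simp [h]
  rw [Finset.sum_congr rfl fun u _ => this u, ← Finset.mul_sum]
  congr 1
  rw [Finset.sum_ite]
  have h1 : Finset.univ.filter (fun u => u ∈ S) = S := by ext u; simp
  have h2 : Finset.univ.filter (fun u => ¬ u ∈ S) = Finset.univ \ S := by
    ext u; simp [Finset.mem_sdiff]
  rw [h1, h2, Finset.sum_const, Finset.sum_const, Finset.card_sdiff_of_subset (Finset.subset_univ S)]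
  rw [Finset.card_univ, Fintype.card_fin]
  simp [nsmul_eq_mul]

lemma Phi_nu2 (r : ℝ≥0∞) (S : Finset (Fin m)) (hm : 0 < m) (p : ℝ≥0∞) (hp : p ≤ 1) :
    Phi r S (trialM (uniformBin m hm) p hp) = (1 - p) + p * Phi r S (nu1 hm) := by
  rw [Phi, trialM, tsum_pmf_bind_mul, tsum_bool, PMF.ofFintype_apply, PMF.ofFintype_apply]
  simp only [cond_false, cond_true, Bool.false_eq_true, if_false, if_true]
  rw [show (∑' a, (PMF.pure (0:Multiset (Fin m))) a * r ^ sig S a) = 1 from Phi_pure_zero r S]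
  rw [mul_one]
  rfl

lemma tsum_ind_le_Phi (W : PMF (Multiset (Fin m))) (S : Finset (Fin m)) (r c : ℝ≥0∞)
    (g : Multiset (Fin m) → Prop) [DecidablePred g]
    (h : ∀ a, g a → c ≤ r ^ (sig S a)) :
    (∑' a, W a * (if g a then 1 else 0)) * c ≤ Phi r S W := by
  rw [← ENNReal.tsum_mul_right]
  refine ENNReal.tsum_le_tsum fun a => ?_
  by_cases ha : g a
  · rw [if_pos ha, mul_one]
    exact mul_le_mul_right (h a ha) (W a)
  · simp [ha]

lemma Phi_nu1_eq_ofReal (hm : 0 < m) (S : Finset (Fin m)) (R : ℝ) (hR : 0 ≤ R) :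
    Phi (ENNReal.ofReal R) S (nu1 hm)
      = ENNReal.ofReal (1 + ((S.card : ℝ)/m) * (R - 1)) := by
  have hSm : S.card ≤ m := by
    simpa [Fintype.card_fin] using Finset.card_le_card (Finset.subset_univ S)
  have hm' : (0:ℝ) < m := by exact_mod_cast hm
  rw [Phi_nu1]
  have e1 : ((S.card : ℝ≥0∞)) = ENNReal.ofReal (S.card : ℝ) := by
    rw [ENNReal.ofReal_natCast]
  have e2 : (((m - S.card : ℕ)) : ℝ≥0∞) = ENNReal.ofReal ((m : ℝ) - S.card) := by
    rw [← ENNReal.ofReal_natCast (m - S.card)]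
    congr 1
    push_cast [Nat.cast_sub hSm]
    ring
  have e3 : ((m : ℝ≥0∞))⁻¹ = ENNReal.ofReal ((m : ℝ))⁻¹ := by
    rw [← ENNReal.ofReal_natCast m, ← ENNReal.ofReal_inv_of_pos hm']
  rw [e1, e2, e3, ← ENNReal.ofReal_mul (by positivity),
    ← ENNReal.ofReal_add (by positivity) (by
      have : (S.card : ℝ) ≤ m := by exact_mod_cast hSm
      linarith),
    ← ENNReal.ofReal_mul (by positivity)]
  congr 1
  field_simp
  ring

lemma Phi_nu1_le (hm : 0 < m) (S : Finset (Fin m)) (R : ℝ) (hR : 0 ≤ R) :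
    Phi (ENNReal.ofReal R) S (nu1 hm)
      ≤ ENNReal.ofReal (Real.exp (((S.card : ℝ)/m) * (R - 1))) := by
  rw [Phi_nu1_eq_ofReal hm S R hR]
  exact ENNReal.ofReal_le_ofReal (by
    have := Real.add_one_le_exp (((S.card : ℝ)/m) * (R - 1))
    linarith)

lemma Phi_nu2_le (hm : 0 < m) (S : Finset (Fin m)) (p : ℝ) (hp0 : 0 ≤ p) (hp1 : p ≤ 1)
    (R : ℝ) (hR : 0 ≤ R) :
    Phi (ENNReal.ofReal R) S (trialM (uniformBin m hm) (ENNReal.ofReal p)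
        (ENNReal.ofReal_le_one.mpr hp1))
      ≤ ENNReal.ofReal (Real.exp (p * ((S.card : ℝ)/m) * (R - 1))) := by
  have hSm : S.card ≤ m := by
    simpa [Fintype.card_fin] using Finset.card_le_card (Finset.subset_univ S)
  have hm' : (0:ℝ) < m := by exact_mod_cast hm
  have hα0 : (0:ℝ) ≤ (S.card : ℝ)/m := by positivity
  have hα1 : ((S.card : ℝ)/m) ≤ 1 := by
    rw [div_le_one hm']; exact_mod_cast hSm
  have hval : (0:ℝ) ≤ 1 + ((S.card : ℝ)/m) * (R - 1) := by nlinarith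
  rw [Phi_nu2, Phi_nu1_eq_ofReal hm S R hR]
  have e1 : (1 : ℝ≥0∞) - ENNReal.ofReal p = ENNReal.ofReal (1 - p) := by
    rw [ENNReal.ofReal_sub 1 hp0, ENNReal.ofReal_one]
  rw [e1, ← ENNReal.ofReal_mul hp0, ← ENNReal.ofReal_add (by linarith) (by positivity)]
  refine ENNReal.ofReal_le_ofReal ?_
  have harg : (1 - p) + p * (1 + ((S.card : ℝ)/m) * (R - 1))
      = 1 + (p * ((S.card : ℝ)/m)) * (R - 1) := by ring
  rw [harg]
  have := Real.add_one_le_exp ((p * ((S.card : ℝ)/m)) * (R - 1))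
  linarith [this]

lemma chernoff (hm : 0 < m) (p : ℝ) (hp0 : 0 ≤ p) (hp1 : p ≤ 1) (k n : ℕ)
    (S : Finset (Fin m)) (θ B : ℝ) (g : Multiset (Fin m) → Prop) [DecidablePred g]
    (hg : ∀ a, g a → B ≤ θ * (sig S a : ℝ)) :
    (∑' a, (Ztot hm (ENNReal.ofReal p) (ENNReal.ofReal_le_one.mpr hp1) k n) a *
        (if g a then 1 else 0))
      ≤ ENNReal.ofReal
          (Real.exp (((k:ℝ) + n*p) * ((S.card : ℝ)/m) * (Real.exp θ - 1) - B)) := by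
  classical
  set R := Real.exp θ with hRdef
  have hR0 : (0:ℝ) ≤ R := (Real.exp_pos θ).le
  set Z := Ztot hm (ENNReal.ofReal p) (ENNReal.ofReal_le_one.mpr hp1) k n with hZdef
  have hpt : ∀ a, g a → ENNReal.ofReal (Real.exp B) ≤ (ENNReal.ofReal R) ^ (sig S a) := by
    intro a ha
    rw [← ENNReal.ofReal_pow hR0, hRdef, ← Real.exp_nat_mul]
    refine ENNReal.ofReal_le_ofReal (Real.exp_le_exp.mpr ?_)
    calc B ≤ θ * (sig S a : ℝ) := hg a ha
      _ = (sig S a : ℝ) * θ := by ring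
  have hM := tsum_ind_le_Phi Z S (ENNReal.ofReal R) (ENNReal.ofReal (Real.exp B)) g hpt
  set α : ℝ := (S.card : ℝ)/m with hα
  have hPhi : Phi (ENNReal.ofReal R) S Z
      ≤ ENNReal.ofReal (Real.exp (((k:ℝ) + n*p) * α * (R-1))) := by
    rw [hZdef, Ztot, Phi_conv, Phi_repeat, Phi_repeat]
    calc (Phi (ENNReal.ofReal R) S (nu1 hm)) ^ k *
          (Phi (ENNReal.ofReal R) S (trialM (uniformBin m hm) (ENNReal.ofReal p)
            (ENNReal.ofReal_le_one.mpr hp1))) ^ n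
        ≤ (ENNReal.ofReal (Real.exp (α * (R-1)))) ^ k *
            (ENNReal.ofReal (Real.exp (p * α * (R-1)))) ^ n := by
          exact mul_le_mul' (pow_le_pow_left' (Phi_nu1_le hm S R hR0) k)
            (pow_le_pow_left' (Phi_nu2_le hm S p hp0 hp1 R hR0) n)
      _ = ENNReal.ofReal (Real.exp ((k:ℝ) * (α * (R-1))) *
            Real.exp ((n:ℝ) * (p * α * (R-1)))) := by
          rw [← ENNReal.ofReal_pow (Real.exp_pos _).le, ← ENNReal.ofReal_pow (Real.exp_pos _).le,
            ← Real.exp_nat_mul, ← Real.exp_nat_mul,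
            ENNReal.ofReal_mul (Real.exp_pos _).le]
      _ = ENNReal.ofReal (Real.exp (((k:ℝ) + n*p) * α * (R-1))) := by
          rw [← Real.exp_add]
          congr 1
          ring
  have hmul : (∑' a, Z a * (if g a then 1 else 0)) * ENNReal.ofReal (Real.exp B)
      ≤ ENNReal.ofReal (Real.exp (((k:ℝ) + n*p) * α * (R-1))) := le_trans hM hPhi
  have hne0 : ENNReal.ofReal (Real.exp B) ≠ 0 :=
    (ENNReal.ofReal_pos.mpr (Real.exp_pos B)).ne'
  have hnetop : ENNReal.ofReal (Real.exp B) ≠ ⊤ := ENNReal.ofReal_ne_top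
  have := (ENNReal.le_div_iff_mul_le (Or.inl hne0) (Or.inl hnetop)).mpr hmul
  refine le_trans this ?_
  rw [← ENNReal.ofReal_div_of_pos (Real.exp_pos B), ← Real.exp_sub]
end Stage2


lemma exp_neg_le_quad {x : ℝ} (hx : 0 ≤ x) :
    Real.exp (-x) ≤ 1 - x + x^2/2 := by
  have hmono : MonotoneOn (fun t : ℝ => 1 - t + t^2/2 - Real.exp (-t)) (Set.Ici 0) := by
    have hder : ∀ t : ℝ, HasDerivAt (fun t : ℝ => 1 - t + t^2/2 - Real.exp (-t))
        (-1 + t + Real.exp (-t)) t := by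
      intro t
      have h1 : HasDerivAt (fun t : ℝ => 1 - t) (-1) t := by
        simpa using (hasDerivAt_id t).const_sub 1
      have h2 : HasDerivAt (fun t : ℝ => t^2/2) t t := by
        simpa using (hasDerivAt_pow 2 t).div_const 2
      have h3 : HasDerivAt (fun t : ℝ => Real.exp (-t)) (-Real.exp (-t)) t := by
        simpa [Function.comp_def] using (Real.hasDerivAt_exp (-t)).comp t (hasDerivAt_neg t)
      have := ((h1.add h2).sub h3)
      exact this.congr_deriv (by ring)
    refine monotoneOn_of_deriv_nonneg (convex_Ici 0) ?_ ?_ ?_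
    · exact Continuous.continuousOn (by continuity)
    · intro t _
      exact (hder t).differentiableAt.differentiableWithinAt
    · intro t ht
      rw [(hder t).deriv]
      have := Real.add_one_le_exp (-t)
      linarith
  have h0 : (fun t : ℝ => 1 - t + t^2/2 - Real.exp (-t)) 0 = 0 := by simp
  have := hmono (Set.mem_Ici.mpr le_rfl) (Set.mem_Ici.mpr hx) hx
  rw [h0] at this
  linarith [this]

lemma exp_quarter_bound {ε : ℝ} (hε0 : 0 ≤ ε) (hε3 : ε ≤ 3) :
    Real.exp (ε/4) ≤ 1 + ε/4 + (3/4)*(ε/4)^2 := by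
  have h := Real.exp_bound' (show (0:ℝ) ≤ ε/4 by linarith) (show (ε/4:ℝ) ≤ 1 by linarith) (n := 2) (by norm_num)
  have hsum : (∑ i ∈ Finset.range 2, (ε/4) ^ i / i.factorial) = 1 + ε/4 := by
    simp [Finset.sum_range_succ]
  rw [hsum] at h
  norm_num [Nat.factorial] at h
  nlinarith [h]

lemma num1 (ε μ L : ℝ) (hε0 : 0 < ε) (hε3 : ε ≤ 3) (hL : 0 < L) (hμ : 32*L/ε^2 ≤ μ) :
    μ * (Real.exp (ε/4) - 1) - (ε/4)*((1+ε/3)*μ) ≤ -L := by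
  have hμ2 : 32*L ≤ μ*ε^2 := by
    rw [div_le_iff₀ (by positivity)] at hμ; linarith
  have hμ0 : 0 ≤ μ := le_trans (by positivity) hμ
  have hB := exp_quarter_bound hε0.le hε3
  nlinarith [mul_le_mul_of_nonneg_left hB hμ0, sq_nonneg ε, mul_nonneg hμ0 (sq_nonneg ε)]

lemma num2 (ε μ L : ℝ) (hε0 : 0 < ε) (hε3 : ε ≤ 3) (hL : 0 < L) (hμ : 32*L/ε^2 ≤ μ) :
    μ * (Real.exp (-(ε/4)) - 1) + (ε/4)*((1-ε/4)*μ) ≤ -L := by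
  have hμ2 : 32*L ≤ μ*ε^2 := by
    rw [div_le_iff₀ (by positivity)] at hμ; linarith
  have hμ0 : 0 ≤ μ := le_trans (by positivity) hμ
  have hB := exp_neg_le_quad (x := ε/4) (by linarith)
  nlinarith [mul_le_mul_of_nonneg_left hB hμ0]

lemma num3 (ε μ : ℝ) (hε0 : 0 < ε) (hε3 : ε ≤ 3) (hμ22 : 22 ≤ μ * ε^2) (hμ0 : 0 < μ) :
    1 + (1+ε/3)*μ ≤ Real.exp ε * ((1-ε/4)*μ) := by
  have hexp : 1+ε+ε^2/2+ε^3/6+ε^4/24 ≤ Real.exp ε := by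
    have h := Real.sum_le_exp_of_nonneg hε0.le 5
    have : (∑ i ∈ Finset.range 5, ε ^ i / i.factorial) = 1+ε+ε^2/2+ε^3/6+ε^4/24 := by
      simp [Finset.sum_range_succ, Nat.factorial]
      try ring
    linarith [this ▸ h]
  have h1 : (0:ℝ) < 1 - ε/4 := by linarith
  have hone : 1 ≤ μ * ε^2 / 22 := by linarith [hμ22]
  nlinarith [mul_le_mul_of_nonneg_right hexp (by positivity : (0:ℝ) ≤ (1-ε/4)*μ),
    mul_pos hμ0 (by positivity : (0:ℝ) < ε^2), sq_nonneg ε, sq_nonneg (ε-3),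
    mul_nonneg (mul_nonneg hμ0.le (by positivity : (0:ℝ) ≤ ε^2)) (by linarith : (0:ℝ) ≤ 3 - ε),
    mul_nonneg hμ0.le (by positivity : (0:ℝ) ≤ ε^3)]



set_option maxHeartbeats 1000000 in
theorem stmt0 (m s k n : ℕ) (hm : 0 < m) (hs : 0 < s) (hk : 0 < k) (hn : 0 < n) (hsm : s ≤ m)
    (p : ℝ) (hp0 : 0 ≤ p) (hp1 : p ≤ 1)
    (ε δ : ℝ) (hε0 : 0 < ε) (hε3 : ε ≤ 3) (hδ0 : 0 < δ) (hδ1 : δ < 1)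
    (hnoise : (k : ℝ) + n * p ≥ 32 * Real.log (2 / δ) / ε ^ 2 * ((m : ℝ) / s))
    (S S' : Finset (Fin m)) (hScard : S.card = s) (hS'card : S'.card = s) (hSS' : S ≠ S')
    (Y : Set (Multiset (Fin m))) :
    ((MBIB m k n hm (ENNReal.ofReal p) (ENNReal.ofReal_le_one.mpr hp1) S
        (Finset.card_pos.mp (hScard ▸ hs))).toOuterMeasure Y).toReal ≤
      Real.exp ε *
        ((MBIB m k n hm (ENNReal.ofReal p) (ENNReal.ofReal_le_one.mpr hp1) S'
          (Finset.card_pos.mp (hS'card ▸ hs))).toOuterMeasure Y).toReal + δ := by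
  classical
  set hS₁ : S.Nonempty := Finset.card_pos.mp (hScard ▸ hs)
  set hS₂ : S'.Nonempty := Finset.card_pos.mp (hS'card ▸ hs)
  set p' : ℝ≥0∞ := ENNReal.ofReal p with hp'def
  set hp' : p' ≤ 1 := ENNReal.ofReal_le_one.mpr hp1
  set μ₁ := MBIB m k n hm p' hp' S hS₁ with hμ₁def
  set μ₂ := MBIB m k n hm p' hp' S' hS₂ with hμ₂def
  set Z := Ztot hm p' hp' k n with hZdef
  have hm' : (0:ℝ) < m := by exact_mod_cast hm
  have hs' : (0:ℝ) < s := by exact_mod_cast hs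
  set L : ℝ := Real.log (2/δ) with hLdef
  have hL2 : Real.log 2 ≤ L := by
    apply Real.log_le_log (by norm_num)
    rw [le_div_iff₀ hδ0]
    nlinarith
  have hL : 0 < L := lt_of_lt_of_le (by positivity : (0:ℝ) < Real.log 2) hL2
  set μR : ℝ := ((k:ℝ) + n*p) * ((s:ℝ)/m) with hμRdef
  have hμR : 32*L/ε^2 ≤ μR := by
    have h1 := mul_le_mul_of_nonneg_right hnoise (by positivity : (0:ℝ) ≤ (s:ℝ)/m)
    calc 32*L/ε^2 = 32*L/ε^2 * ((m:ℝ)/s) * ((s:ℝ)/m) := by field_simp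
      _ ≤ μR := h1
  have hμ0 : 0 < μR := lt_of_lt_of_le (by positivity) hμR
  set A : ℝ := (1-ε/4)*μR with hAdef
  set Bb : ℝ := 1+(1+ε/3)*μR with hBbdef
  have hA0 : 0 < A := by rw [hAdef]; nlinarith
  have hμ22 : 22 ≤ μR * ε^2 := by
    have : 32*L ≤ μR*ε^2 := by
      rw [div_le_iff₀ (by positivity)] at hμR; linarith
    nlinarith [Real.log_two_gt_d9]
  have hBA : Bb ≤ Real.exp ε * A := num3 ε μR hε0 hε3 hμ22 hμ0
  have hexpL : Real.exp (-L) = δ/2 := by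
    rw [Real.exp_neg, hLdef, Real.exp_log (by positivity)]
    rw [inv_div]
  -- good event
  set Good : Multiset (Fin m) → Prop :=
    fun y => ((sig S y : ℝ) ≤ Bb ∧ A ≤ (sig S' y : ℝ)) with hGood
  -- pointwise bound on the good event
  have hgood : ∀ y, Good y → μ₁ y ≤ ENNReal.ofReal (Real.exp ε) * μ₂ y := by
    rintro y ⟨h1, h2⟩
    have hId := ratio_identity k n hm p' hp' S S' hS₁ hS₂ (by rw [hScard, hS'card]) y
    have hσpos : (0:ℝ) < (sig S' y : ℝ) := lt_of_lt_of_le hA0 h2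
    have hσnat : 0 < sig S' y := by exact_mod_cast hσpos
    have hσne : sigE S' y ≠ 0 := by
      rw [sigE_eq]
      exact_mod_cast hσnat.ne'
    have hσtop : sigE S' y ≠ ⊤ := by rw [sigE_eq]; exact ENNReal.natCast_ne_top _
    have hcast : sigE S y ≤ ENNReal.ofReal (Real.exp ε) * sigE S' y := by
      rw [sigE_eq, sigE_eq]
      have hR : (sig S y : ℝ) ≤ Real.exp ε * (sig S' y : ℝ) := by
        calc (sig S y : ℝ) ≤ Bb := h1
          _ ≤ Real.exp ε * A := hBA
          _ ≤ Real.exp ε * (sig S' y : ℝ) :=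
            mul_le_mul_of_nonneg_left h2 (Real.exp_pos ε).le
      calc ((sig S y : ℕ) : ℝ≥0∞) = ENNReal.ofReal ((sig S y : ℕ) : ℝ) :=
            (ENNReal.ofReal_natCast _).symm
        _ ≤ ENNReal.ofReal (Real.exp ε * ((sig S' y : ℕ) : ℝ)) := ENNReal.ofReal_le_ofReal hR
        _ = ENNReal.ofReal (Real.exp ε) * ENNReal.ofReal ((sig S' y : ℕ) : ℝ) :=
            ENNReal.ofReal_mul (Real.exp_pos ε).le
        _ = ENNReal.ofReal (Real.exp ε) * ((sig S' y : ℕ) : ℝ≥0∞) := by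
            rw [ENNReal.ofReal_natCast]
    have hchain : μ₁ y * sigE S' y
        ≤ (ENNReal.ofReal (Real.exp ε) * μ₂ y) * sigE S' y := by
      calc μ₁ y * sigE S' y = μ₂ y * sigE S y := hId
        _ ≤ μ₂ y * (ENNReal.ofReal (Real.exp ε) * sigE S' y) := mul_le_mul_right hcast _
        _ = (ENNReal.ofReal (Real.exp ε) * μ₂ y) * sigE S' y := by ring
    exact (ENNReal.mul_le_mul_iff_left hσne hσtop).mp hchain
  -- tail bounds
  have hT1 : (∑' a, Z a * (if ((1+ε/3)*μR < (sig S a : ℝ)) then 1 else 0))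
      ≤ ENNReal.ofReal (δ/2) := by
    have hcher := chernoff hm p hp0 hp1 k n S (ε/4) ((ε/4)*((1+ε/3)*μR))
      (fun a => ((1+ε/3)*μR < (sig S a : ℝ)))
      (fun a ha => by
        have h := mul_le_mul_of_nonneg_left (le_of_lt ha) (by positivity : (0:ℝ) ≤ ε/4)
        linarith)
    refine le_trans hcher (ENNReal.ofReal_le_ofReal ?_)
    rw [← hexpL]
    apply Real.exp_le_exp.mpr
    have hcard : ((S.card : ℝ)/m) = (s:ℝ)/m := by rw [hScard]
    rw [hcard]
    have : ((k:ℝ) + n*p) * ((s:ℝ)/m) = μR := by rw [hμRdef]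
    rw [this]
    exact num1 ε μR L hε0 hε3 hL hμR
  have hT2 : (∑' a, Z a * (if ((sig S' a : ℝ) < A) then 1 else 0))
      ≤ ENNReal.ofReal (δ/2) := by
    have hcher := chernoff hm p hp0 hp1 k n S' (-(ε/4)) (-(ε/4)*A)
      (fun a => ((sig S' a : ℝ) < A))
      (fun a ha => by
        have h := mul_le_mul_of_nonneg_left (le_of_lt ha) (by positivity : (0:ℝ) ≤ ε/4)
        linarith)
    refine le_trans hcher (ENNReal.ofReal_le_ofReal ?_)
    rw [← hexpL]
    apply Real.exp_le_exp.mpr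
    have hcard : ((S'.card : ℝ)/m) = (s:ℝ)/m := by rw [hS'card]
    rw [hcard]
    have : ((k:ℝ) + n*p) * ((s:ℝ)/m) = μR := by rw [hμRdef]
    rw [this]
    have := num2 ε μR L hε0 hε3 hL hμR
    rw [hAdef]
    linarith
  -- bad event bound
  have hbad : (∑' y, μ₁ y * (if ¬ Good y then 1 else 0))
      ≤ ENNReal.ofReal (δ/2) + ENNReal.ofReal (δ/2) := by
    rw [hμ₁def, MBIB_eq k n hm p' hp' S hS₁, ← hZdef, tsum_pmf_bind_mul]
    have hinner : ∀ x : Fin m,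
        (∑' y, (Z.map (x ::ₘ ·)) y * (if ¬ Good y then 1 else 0))
          ≤ ENNReal.ofReal (δ/2) + ENNReal.ofReal (δ/2) := by
      intro x
      rw [tsum_pmf_map_mul]
      have hptw : ∀ a : Multiset (Fin m),
          Z a * (if ¬ Good (x ::ₘ a) then 1 else 0)
            ≤ Z a * (if ((1+ε/3)*μR < (sig S a : ℝ)) then 1 else 0)
              + Z a * (if ((sig S' a : ℝ) < A) then 1 else 0) := by
        intro a
        by_cases hbd : ¬ Good (x ::ₘ a)
        · rw [if_pos hbd]
          simp only [hGood] at hbd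
          push_neg at hbd
          by_cases hc : (sig S (x ::ₘ a) : ℝ) ≤ Bb
          · have h2 := hbd hc
            have hlt : (sig S' a : ℝ) < A := by
              have hmono : (sig S' a : ℝ) ≤ (sig S' (x ::ₘ a) : ℝ) := by
                exact_mod_cast (sig_cons_bounds S' x a).1
              linarith
            rw [if_pos hlt]
            exact le_add_self
          · push_neg at hc
            have hlt : (1+ε/3)*μR < (sig S a : ℝ) := by
              have hmono : (sig S (x ::ₘ a) : ℝ) ≤ (sig S a : ℝ) + 1 := by
                exact_mod_cast (sig_cons_bounds S x a).2
              rw [hBbdef] at hc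
              linarith
            rw [if_pos hlt]
            exact le_self_add
        · rw [if_neg hbd, mul_zero]
          exact zero_le
      calc (∑' a, Z a * (if ¬ Good (x ::ₘ a) then 1 else 0))
          ≤ ∑' a, (Z a * (if ((1+ε/3)*μR < (sig S a : ℝ)) then 1 else 0)
              + Z a * (if ((sig S' a : ℝ) < A) then 1 else 0)) :=
            ENNReal.tsum_le_tsum hptw
        _ = (∑' a, Z a * (if ((1+ε/3)*μR < (sig S a : ℝ)) then 1 else 0))
              + (∑' a, Z a * (if ((sig S' a : ℝ) < A) then 1 else 0)) := ENNReal.tsum_add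
        _ ≤ ENNReal.ofReal (δ/2) + ENNReal.ofReal (δ/2) := add_le_add hT1 hT2
    calc (∑' x, (PMF.uniformOfFinset S hS₁) x *
          ∑' y, (Z.map (x ::ₘ ·)) y * (if ¬ Good y then 1 else 0))
        ≤ ∑' x, (PMF.uniformOfFinset S hS₁) x *
            (ENNReal.ofReal (δ/2) + ENNReal.ofReal (δ/2)) :=
          ENNReal.tsum_le_tsum fun x => mul_le_mul_right (hinner x) _
      _ = (ENNReal.ofReal (δ/2) + ENNReal.ofReal (δ/2)) := by
          rw [ENNReal.tsum_mul_right, PMF.tsum_coe, one_mul]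
  -- main assembly
  have main : μ₁.toOuterMeasure Y
      ≤ ENNReal.ofReal (Real.exp ε) * μ₂.toOuterMeasure Y + ENNReal.ofReal δ := by
    rw [PMF.toOuterMeasure_apply, PMF.toOuterMeasure_apply]
    calc (∑' y, Y.indicator μ₁ y)
        ≤ ∑' y, (Y.indicator μ₁ y * (if Good y then 1 else 0)
            + μ₁ y * (if ¬ Good y then 1 else 0)) := by
          refine ENNReal.tsum_le_tsum fun y => ?_
          by_cases hg : Good y
          · rw [if_pos hg, if_neg (by simpa using hg), mul_one, mul_zero, add_zero]
          · rw [if_neg hg, if_pos hg, mul_zero, mul_one, zero_add]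
            exact Set.indicator_le_self Y μ₁ y
      _ = (∑' y, Y.indicator μ₁ y * (if Good y then 1 else 0))
            + (∑' y, μ₁ y * (if ¬ Good y then 1 else 0)) := ENNReal.tsum_add
      _ ≤ (∑' y, ENNReal.ofReal (Real.exp ε) * Y.indicator μ₂ y)
            + (ENNReal.ofReal (δ/2) + ENNReal.ofReal (δ/2)) := by
          refine add_le_add (ENNReal.tsum_le_tsum fun y => ?_) hbad
          by_cases hy : y ∈ Y
          · rw [Set.indicator_of_mem hy, Set.indicator_of_mem hy]
            by_cases hg : Good y
            · rw [if_pos hg, mul_one]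
              exact hgood y hg
            · rw [if_neg hg, mul_zero]
              exact zero_le
          · rw [Set.indicator_of_notMem hy, Set.indicator_of_notMem hy]
            simp
      _ = ENNReal.ofReal (Real.exp ε) * (∑' y, Y.indicator μ₂ y) + ENNReal.ofReal δ := by
          rw [ENNReal.tsum_mul_left, ← ENNReal.ofReal_add (by positivity) (by positivity)]
          norm_num
  -- convert to reals
  have hμ₂fin : μ₂.toOuterMeasure Y ≠ ⊤ := by
    refine ne_top_of_le_ne_top (by simp : (1:ℝ≥0∞) ≠ ⊤) ?_
    rw [PMF.toOuterMeasure_apply]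
    calc (∑' y, Y.indicator μ₂ y) ≤ ∑' y, μ₂ y :=
        ENNReal.tsum_le_tsum fun y => Set.indicator_le_self Y μ₂ y
      _ = 1 := PMF.tsum_coe μ₂
  have hRHSfin : ENNReal.ofReal (Real.exp ε) * μ₂.toOuterMeasure Y + ENNReal.ofReal δ ≠ ⊤ := by
    apply ENNReal.add_ne_top.mpr
    constructor
    · exact ENNReal.mul_ne_top ENNReal.ofReal_ne_top hμ₂fin
    · exact ENNReal.ofReal_ne_top
  have := ENNReal.toReal_mono hRHSfin main
  refine le_trans this ?_
  rw [ENNReal.toReal_add (ENNReal.mul_ne_top ENNReal.ofReal_ne_top hμ₂fin) ENNReal.ofReal_ne_top,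
    ENNReal.toReal_mul, ENNReal.toReal_ofReal (Real.exp_pos ε).le,
    ENNReal.toReal_ofReal hδ0.le]
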